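/- Let γ_n : I → ℝ^{1+n} be a sequence of future-directed causal curves, each achronal (for no s, s' ∈ I does γ_n(s') lie in I^+(γ_n(s))), converging uniformly on compact subsets of I to a future-directed causal curve γ : I → ℝ^{1+n}. Then γ is achronal. -/

import Mathlib

open Set MeasureTheory Filter Topology
open scoped RealInnerProductSpace

noncomputable section

/-- Minkowski space-time `ℝ^{1+n} = ℝ × ℝ^n`. -/
abbrev Mink (n : ℕ) : Type := ℝ × EuclideanSpace ℝ (Fin n)

/-- A vector is timelike future-directed if `v⁰ > |v⃗|`. -/
def timelikeFD {n : ℕ} (v : Mink n) : Prop := ‖v.2‖ < v.1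

/-- A vector is causal future-directed if `v ≠ 0` and `v⁰ ≥ |v⃗|`. -/
def causalFD {n : ℕ} (v : Mink n) : Prop := v ≠ 0 ∧ ‖v.2‖ ≤ v.1

/-- A vector is null future-directed if `v ≠ 0` and `v⁰ = |v⃗|`. -/
def nullFD {n : ℕ} (v : Mink n) : Prop := v ≠ 0 ∧ ‖v.2‖ = v.1

/-- A vector is causal past-directed if `-v` is causal future-directed. -/
def causalPD {n : ℕ} (v : Mink n) : Prop := causalFD (-v)

/-- The Minkowski bilinear form `η(x,y) = -x⁰y⁰ + ⟨x⃗,y⃗⟩`. -/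
def minkBF {n : ℕ} (x y : Mink n) : ℝ := -(x.1 * y.1) + ⟪x.2, y.2⟫

/-- The Euclidean norm on `ℝ^{1+n}`. -/
def eNorm {n : ℕ} (v : Mink n) : ℝ := Real.sqrt (v.1 ^ 2 + ‖v.2‖ ^ 2)

/-- A future-directed causal curve defined on `S ⊆ ℝ`: locally Lipschitz, with
almost-everywhere derivative causal future-directed. -/
def IsCausalCurveOn {n : ℕ} (γ : ℝ → Mink n) (S : Set ℝ) : Prop :=
  (∀ a b : ℝ, Icc a b ⊆ S → ∃ K : NNReal, LipschitzOnWith K γ (Icc a b)) ∧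
  (∀ᵐ s ∂(volume.restrict S), ∃ v : Mink n, HasDerivWithinAt γ v S s ∧ causalFD v)

/-- A future-directed timelike curve defined on `S ⊆ ℝ`. -/
def IsTimelikeCurveOn {n : ℕ} (γ : ℝ → Mink n) (S : Set ℝ) : Prop :=
  (∀ a b : ℝ, Icc a b ⊆ S → ∃ K : NNReal, LipschitzOnWith K γ (Icc a b)) ∧
  (∀ᵐ s ∂(volume.restrict S), ∃ v : Mink n, HasDerivWithinAt γ v S s ∧ timelikeFD v)

/-- A past-directed causal curve defined on `S ⊆ ℝ`. -/
def IsPastCausalCurveOn {n : ℕ} (γ : ℝ → Mink n) (S : Set ℝ) : Prop :=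
  (∀ a b : ℝ, Icc a b ⊆ S → ∃ K : NNReal, LipschitzOnWith K γ (Icc a b)) ∧
  (∀ᵐ s ∂(volume.restrict S), ∃ v : Mink n, HasDerivWithinAt γ v S s ∧ causalPD v)

/-- `chron p q`: there is a future-directed timelike curve from `p` to `q`. -/
def chron {n : ℕ} (p q : Mink n) : Prop :=
  ∃ (a b : ℝ) (γ : ℝ → Mink n), a < b ∧ IsTimelikeCurveOn γ (Icc a b) ∧ γ a = p ∧ γ b = q

/-- `caus p q`: `q = p`, or there is a future-directed causal curve from `p` to `q`. -/
def caus {n : ℕ} (p q : Mink n) : Prop :=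
  p = q ∨ ∃ (a b : ℝ) (γ : ℝ → Mink n), a < b ∧ IsCausalCurveOn γ (Icc a b) ∧ γ a = p ∧ γ b = q

/-- `causPast p q`: `q = p`, or there is a past-directed causal curve from `p` to `q`. -/
def causPast {n : ℕ} (p q : Mink n) : Prop :=
  p = q ∨ ∃ (a b : ℝ) (γ : ℝ → Mink n), a < b ∧ IsPastCausalCurveOn γ (Icc a b) ∧ γ a = p ∧ γ b = q

/-- The timelike future `I⁺(U)`. -/
def Iplus {n : ℕ} (U : Set (Mink n)) : Set (Mink n) := {q | ∃ p ∈ U, chron p q}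

/-- The causal future `J⁺(U)`. -/
def Jplus {n : ℕ} (U : Set (Mink n)) : Set (Mink n) := {q | ∃ p ∈ U, caus p q}

/-- The causal past `J⁻(U)`. -/
def Jminus {n : ℕ} (U : Set (Mink n)) : Set (Mink n) := {q | ∃ p ∈ U, causPast p q}

/-- An inextendible future-directed timelike curve: defined on all of `ℝ`, locally
Lipschitz, parameterized by Euclidean arclength, with a.e. timelike future derivative. -/
def IsInextTimelike {n : ℕ} (γ : ℝ → Mink n) : Prop :=
  LocallyLipschitz γ ∧
  ∀ᵐ s : ℝ, ∃ v : Mink n, HasDerivAt γ v s ∧ timelikeFD v ∧ eNorm v = 1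


open Set MeasureTheory Filter Topology intervalIntegral

/-- Core analytic lemma: a Lipschitz function on `[a,b]` with a.e. positive
derivative (within `[a,b]`) satisfies `g a < g b`. -/
lemma core_pos {a b : ℝ} (hab : a < b) {K : NNReal} {g d : ℝ → ℝ}
    (hg : LipschitzOnWith K g (Icc a b))
    (hd : ∀ᵐ s ∂(volume.restrict (Icc a b)),
      HasDerivWithinAt g (d s) (Icc a b) s ∧ 0 < d s) :
    g a < g b := by
  set μ := volume.restrict (Icc a b) with hμ
  obtain ⟨G, hG, hGg⟩ := hg.extend_real
  -- the sequence of step sizes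
  set h : ℕ → ℝ := fun n => (b - a) / (n + 1) with hh
  have hpos : ∀ n, 0 < h n := fun n => div_pos (by linarith) (by positivity)
  have htend : Tendsto h atTop (𝓝 0) := by
    apply Tendsto.div_atTop tendsto_const_nhds
    exact tendsto_atTop_add_const_right _ 1 tendsto_natCast_atTop_atTop
  -- difference quotients
  set F : ℕ → ℝ → ℝ := fun n x => (G (x + h n) - G x) / h n with hF
  have hFcont : ∀ n, Continuous (F n) := fun n =>
    ((hG.continuous.comp (continuous_id.add continuous_const)).sub hG.continuous).div_const _
  have hFbound : ∀ n x, |F n x| ≤ K := by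
    intro n x
    rw [abs_div, abs_of_pos (hpos n), div_le_iff₀ (hpos n)]
    have := hG.dist_le_mul (x + h n) x
    rw [Real.dist_eq, Real.dist_eq] at this
    simpa [abs_of_pos (hpos n)] using this
  -- a.e. x ≠ b
  have hbne : ∀ᵐ x ∂μ, x ≠ b := by
    rw [ae_iff]
    have : {x | ¬ x ≠ b} = {b} := by ext x; simp
    rw [this]
    exact le_antisymm ((Measure.restrict_apply_le _ _).trans (by simp)) (zero_le)
  -- a.e. convergence of the quotients to d
  have hconv : ∀ᵐ x ∂μ, Tendsto (fun n => F n x) atTop (𝓝 (d x)) := by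
    filter_upwards [hd, ae_restrict_mem measurableSet_Icc, hbne] with x hx hmem hxb
    have hxb' : x < b := lt_of_le_of_ne hmem.2 hxb
    have hGd : HasDerivWithinAt G (d x) (Icc a b) x :=
      hx.1.congr (fun y hy => (hGg hy).symm) (hGg hmem).symm
    have hslope := hasDerivWithinAt_iff_tendsto_slope.mp hGd
    have hseq : Tendsto (fun n => x + h n) atTop (𝓝[Icc a b \ {x}] x) := by
      rw [tendsto_nhdsWithin_iff]
      constructor
      · simpa using tendsto_const_nhds.add htend
      · filter_upwards [htend.eventually_lt_const (show (0:ℝ) < b - x by linarith)]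
          with n hn
        refine ⟨⟨by linarith [hmem.1, (hpos n).le], by linarith⟩, ?_⟩
        simp only [mem_singleton_iff]
        nlinarith [hpos n]
    have := hslope.comp hseq
    refine this.congr fun n => ?_
    show slope G x (x + h n) = F n x
    rw [slope_def_field, add_sub_cancel_left]
  -- d is a.e. strongly measurable and integrable
  have hFmeas : ∀ n, AEStronglyMeasurable (F n) μ := fun n =>
    (hFcont n).aestronglyMeasurable
  have hdmeas : AEStronglyMeasurable d μ :=
    aestronglyMeasurable_of_tendsto_ae atTop hFmeas hconv
  have hboundint : Integrable (fun _ : ℝ => (K : ℝ)) μ := by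
    rw [hμ]
    exact (integrableOn_const_iff).mpr (Or.inr measure_Icc_lt_top)
  -- dominated convergence
  have hDCT : Tendsto (fun n => ∫ x, F n x ∂μ) atTop (𝓝 (∫ x, d x ∂μ)) :=
    tendsto_integral_of_dominated_convergence _ hFmeas hboundint
      (fun n => Eventually.of_forall fun x => by
        simpa [Real.norm_eq_abs] using hFbound n x) hconv
  -- compute the integrals of the quotients
  have hGint : ∀ u v : ℝ, IntervalIntegrable G volume u v := fun u v =>
    hG.continuous.intervalIntegrable u v
  have hFint : ∀ n, ∫ x, F n x ∂μ
      = (∫ x in b..(b + h n), G x) / h n - (∫ x in a..(a + h n), G x) / h n := by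
    intro n
    have h1 : ∫ x, F n x ∂μ = ∫ x in a..b, F n x := by
      rw [hμ, intervalIntegral.integral_of_le hab.le, ← integral_Icc_eq_integral_Ioc]
    rw [h1]
    have hcont' : Continuous fun x : ℝ => G (x + h n) :=
      hG.continuous.comp (continuous_id.add continuous_const)
    have h2 : ∫ x in a..b, F n x
        = ((∫ x in a..b, G (x + h n)) - ∫ x in a..b, G x) / h n := by
      rw [← intervalIntegral.integral_sub (hcont'.intervalIntegrable a b)
        (hGint a b), ← intervalIntegral.integral_div]
    rw [h2, intervalIntegral.integral_comp_add_right]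
    have e1 : (∫ x in a..b, G x) + ∫ x in b..(b + h n), G x = ∫ x in a..(b + h n), G x :=
      intervalIntegral.integral_add_adjacent_intervals (hGint a b) (hGint b _)
    have e2 : (∫ x in a..(a + h n), G x) + ∫ x in (a + h n)..(b + h n), G x
        = ∫ x in a..(b + h n), G x :=
      intervalIntegral.integral_add_adjacent_intervals (hGint a _) (hGint _ _)
    rw [div_sub_div_same]
    congr 1
    linarith
  -- limits of the boundary averages
  have hbdry : ∀ c : ℝ, Tendsto (fun n => (∫ x in c..(c + h n), G x) / h n) atTop (𝓝 (G c)) := by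
    intro c
    have hΦ : HasDerivAt (fun u => ∫ x in c..u, G x) (G c) c :=
      intervalIntegral.integral_hasDerivAt_right (hGint c c)
        (hG.continuous.stronglyMeasurableAtFilter _ _) hG.continuous.continuousAt
    have hslope := hasDerivAt_iff_tendsto_slope.mp hΦ
    have hseq : Tendsto (fun n => c + h n) atTop (𝓝[≠] c) := by
      rw [tendsto_nhdsWithin_iff]
      exact ⟨by simpa using tendsto_const_nhds.add htend,
        Eventually.of_forall fun n => by simp [(hpos n).ne']⟩
    have := hslope.comp hseq
    refine this.congr fun n => ?_
    simp [slope_def_field, intervalIntegral.integral_same]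
  have hlim2 : Tendsto (fun n => ∫ x, F n x ∂μ) atTop (𝓝 (G b - G a)) := by
    have := (hbdry b).sub (hbdry a)
    refine this.congr fun n => (hFint n).symm
  -- identify the limit
  have hkey : ∫ x, d x ∂μ = G b - G a := tendsto_nhds_unique hDCT hlim2
  -- positivity of the integral
  have hdnn : 0 ≤ᵐ[μ] d := by filter_upwards [hd] with x hx; exact hx.2.le
  have hdint : Integrable d μ := by
    refine hboundint.mono' hdmeas ?_
    filter_upwards [hconv] with x hx
    have : Tendsto (fun n => |F n x|) atTop (𝓝 |d x|) := hx.abs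
    exact le_of_tendsto' this fun n => hFbound n x
  have hμne : μ ≠ 0 := by
    rw [hμ, Ne, Measure.restrict_eq_zero, Real.volume_Icc]
    simp [ENNReal.ofReal_eq_zero, not_le]; linarith
  have hpos' : 0 < ∫ x, d x ∂μ := by
    rcases (integral_nonneg_of_ae hdnn).lt_or_eq with heq | heq
    · exact heq
    · exfalso
      have h0 : d =ᵐ[μ] 0 :=
        (MeasureTheory.integral_eq_zero_iff_of_nonneg_ae hdnn hdint).mp heq.symm
      have : ∀ᵐ x ∂μ, False := by
        filter_upwards [h0, hd] with x hx1 hx2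
        rw [Pi.zero_apply] at hx1
        exact absurd hx1 (ne_of_gt hx2.2)
      exact hμne (ae_eq_bot.mp (Filter.eventually_false_iff_eq_bot.mp this))
  have : g b - g a > 0 := by
    rw [hGg (right_mem_Icc.mpr hab.le), hGg (left_mem_Icc.mpr hab.le)]
    linarith [hkey ▸ hpos']
  linarith


/-- If there is a future-directed timelike curve from `p` to `q`, then `q - p`
is timelike future-directed. -/
lemma chron_timelike {n : ℕ} {p q : Mink n} (h : chron p q) : timelikeFD (q - p) := by
  classical
  obtain ⟨a, b, γ, hab, ⟨hlip, hae⟩, hpa, hqb⟩ := h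
  obtain ⟨K, hK⟩ := hlip a b Subset.rfl
  set V : ℝ → Mink n := fun s =>
    if hs : ∃ v : Mink n, HasDerivWithinAt γ v (Icc a b) s ∧ timelikeFD v then hs.choose
    else (1, 0) with hV
  have hVae : ∀ᵐ s ∂(volume.restrict (Icc a b)),
      HasDerivWithinAt γ (V s) (Icc a b) s ∧ timelikeFD (V s) := by
    filter_upwards [hae] with s hs
    rw [hV]; simp only [dif_pos hs]; exact hs.choose_spec
  have key : ∀ u : EuclideanSpace ℝ (Fin n), ‖u‖ ≤ 1 →
      ⟪u, q.2 - p.2⟫ < q.1 - p.1 := by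
    intro u hu
    set L : Mink n →L[ℝ] ℝ :=
      ContinuousLinearMap.fst ℝ ℝ (EuclideanSpace ℝ (Fin n))
        - (innerSL ℝ u).comp (ContinuousLinearMap.snd ℝ ℝ (EuclideanSpace ℝ (Fin n))) with hLdef
    have hLv : ∀ v : Mink n, L v = v.1 - ⟪u, v.2⟫ := fun v => rfl
    have hglip : LipschitzOnWith (‖L‖₊ * K) (fun s => L (γ s)) (Icc a b) :=
      L.lipschitz.comp_lipschitzOnWith hK
    have hgd : ∀ᵐ s ∂(volume.restrict (Icc a b)),
        HasDerivWithinAt (fun s => L (γ s)) ((fun s => L (V s)) s) (Icc a b) s ∧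
          0 < (fun s => L (V s)) s := by
      filter_upwards [hVae] with s hs
      obtain ⟨hs1, hs2⟩ := hs
      refine ⟨L.hasFDerivAt.comp_hasDerivWithinAt s hs1, ?_⟩
      simp only [hLv]
      have h1 : ⟪u, (V s).2⟫ ≤ ‖u‖ * ‖(V s).2‖ := real_inner_le_norm u _
      have h2 : ‖u‖ * ‖(V s).2‖ ≤ ‖(V s).2‖ :=
        mul_le_of_le_one_left (norm_nonneg _) hu
      have h3 : ‖(V s).2‖ < (V s).1 := hs2
      linarith
    have hcore := core_pos hab hglip hgd
    simp only [hpa, hqb, hLv] at hcore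
    have : ⟪u, q.2 - p.2⟫ = ⟪u, q.2⟫ - ⟪u, p.2⟫ := inner_sub_right u q.2 p.2
    linarith
  by_cases hz : q.2 - p.2 = 0
  · have h0 := key 0 (by simp)
    show ‖(q - p).2‖ < (q - p).1
    have h2 : (q - p).2 = q.2 - p.2 := rfl
    rw [h2, hz]
    simpa using h0
  · set u : EuclideanSpace ℝ (Fin n) := ‖q.2 - p.2‖⁻¹ • (q.2 - p.2) with hu
    have hunorm : ‖u‖ = 1 := norm_smul_inv_norm hz
    have hk := key u hunorm.le
    have hinner : ⟪u, q.2 - p.2⟫ = ‖q.2 - p.2‖ := by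
      rw [hu, real_inner_smul_left, real_inner_self_eq_norm_sq]
      have hn : ‖q.2 - p.2‖ ≠ 0 := norm_ne_zero_iff.mpr hz
      field_simp
    show ‖(q - p).2‖ < (q - p).1
    have h2 : (q - p).2 = q.2 - p.2 := rfl
    rw [h2, ← hinner]
    exact hk

/-- If `q - p` is timelike future-directed then there is a future-directed
timelike curve from `p` to `q` (the straight segment). -/
lemma timelike_chron {n : ℕ} {p q : Mink n} (h : timelikeFD (q - p)) : chron p q := by
  refine ⟨0, 1, fun t => p + t • (q - p), one_pos, ⟨?_, ?_⟩, by simp, by simp⟩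
  · intro a' b' _
    have hlw : LipschitzWith ‖q - p‖₊ (fun t : ℝ => p + t • (q - p)) := by
      apply LipschitzWith.of_dist_le_mul
      intro x y
      rw [dist_eq_norm, dist_eq_norm]
      have hxy : (p + x • (q - p)) - (p + y • (q - p)) = (x - y) • (q - p) := by
        rw [sub_smul]; abel
      rw [hxy, norm_smul]
      simp [Real.norm_eq_abs, Real.dist_eq, mul_comm]
    exact ⟨‖q - p‖₊, hlw.lipschitzOnWith⟩
  · refine Filter.Eventually.of_forall fun s => ⟨q - p, ?_, h⟩
    have hda : HasDerivAt (fun t : ℝ => p + t • (q - p)) (q - p) s := by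
      simpa using ((hasDerivAt_id s).smul_const (q - p)).const_add p
    exact hda.hasDerivWithinAt

/-- a locally uniform limit of achronal future-directed causal curves
which is itself a future-directed causal curve is achronal. -/
theorem limit_of_achronal_causal_curves_is_achronal (n : ℕ) (I : Set ℝ)
    (hI : I.OrdConnected)
    (γs : ℕ → ℝ → Mink n) (γ : ℝ → Mink n)
    (hγs : ∀ m : ℕ, IsCausalCurveOn (γs m) I)
    (hach : ∀ m : ℕ, ∀ s ∈ I, ∀ s' ∈ I, ¬ chron (γs m s) (γs m s'))
    (hγ : IsCausalCurveOn γ I)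
    (hconv : ∀ K : Set ℝ, K ⊆ I → IsCompact K →
      TendstoUniformlyOn (fun m => γs m) γ atTop K) :
    ∀ s ∈ I, ∀ s' ∈ I, ¬ chron (γ s) (γ s') := by
  
  intro s hs s' hs' hc
  have htl : timelikeFD (γ s' - γ s) := chron_timelike hc
  have h1 : Tendsto (fun m => γs m s) atTop (𝓝 (γ s)) :=
    (hconv {s} (singleton_subset_iff.mpr hs) isCompact_singleton).tendsto_at rfl
  have h2 : Tendsto (fun m => γs m s') atTop (𝓝 (γ s')) :=
    (hconv {s'} (singleton_subset_iff.mpr hs') isCompact_singleton).tendsto_at rfl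
  have hsub : Tendsto (fun m => γs m s' - γs m s) atTop (𝓝 (γ s' - γ s)) := h2.sub h1
  have hfst : Tendsto (fun m => (γs m s' - γs m s).1) atTop (𝓝 ((γ s' - γ s).1)) :=
    (continuous_fst.tendsto _).comp hsub
  have hsnd : Tendsto (fun m => ‖(γs m s' - γs m s).2‖) atTop (𝓝 ‖(γ s' - γ s).2‖) :=
    ((continuous_snd.tendsto _).comp hsub).norm
  have hev : ∀ᶠ m in atTop, ‖(γs m s' - γs m s).2‖ < (γs m s' - γs m s).1 :=
    hsnd.eventually_lt hfst htl
  obtain ⟨m, hm⟩ := hev.exists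
  exact hach m s hs s' hs' (timelike_chron hm)
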